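/- In R(3,3), for any two distinct black vertices s and t, the longest path from s to t has exactly 7 vertices. -/

import Mathlib

/-- The infinite two-dimensional integer grid graph: vertices are points of `ℤ × ℤ`,
with an edge between two points at distance 1. -/
def GInf : SimpleGraph (ℤ × ℤ) where
  Adj u v := (u.1 - v.1).natAbs + (u.2 - v.2).natAbs = 1
  symm := by constructor; intro u v h; omega
  loopless := by constructor; intro v h; omega

/-- A vertex is white if the sum of its coordinates is even (otherwise it is black). -/
def White (v : ℤ × ℤ) : Prop := Even (v.1 + v.2)

/-- The vertex set of the rectangular grid graph `R(m,n)`. -/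
def RectV (m n : ℕ) : Set (ℤ × ℤ) :=
  {v | 1 ≤ v.1 ∧ v.1 ≤ (m : ℤ) ∧ 1 ≤ v.2 ∧ v.2 ≤ (n : ℤ)}

/-- The rectangular grid graph `R(m,n)`. -/
def R (m n : ℕ) : SimpleGraph (RectV m n) := GInf.induce (RectV m n)


instance : DecidableRel GInf.Adj :=
  fun u v => inferInstanceAs (Decidable ((u.1 - v.1).natAbs + (u.2 - v.2).natAbs = 1))

instance (v : ℤ × ℤ) (m n : ℕ) : Decidable (v ∈ RectV m n) :=
  inferInstanceAs (Decidable (1 ≤ v.1 ∧ v.1 ≤ (m:ℤ) ∧ 1 ≤ v.2 ∧ v.2 ≤ (n:ℤ)))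

instance : DecidableRel (R 3 3).Adj :=
  fun u v => inferInstanceAs (Decidable (GInf.Adj u.val v.val))

instance : DecidablePred White := fun v => inferInstanceAs (Decidable (Even _))

def vtx (x y : ℤ) (h : (x,y) ∈ RectV 3 3 := by decide) : RectV 3 3 := ⟨(x,y), h⟩

lemma P1221 : ∃ p : (R 3 3).Walk (vtx 1 2) (vtx 2 1), p.IsPath ∧ p.support.length = 7 :=
  ⟨(.cons (v := vtx 1 3) (by decide) (.cons (v := vtx 2 3) (by decide) (.cons (v := vtx 3 3) (by decide) (.cons (v := vtx 3 2) (by decide) (.cons (v := vtx 2 2) (by decide) (.cons (v := vtx 2 1) (by decide) .nil)))))), by rw [SimpleGraph.Walk.isPath_def]; decide, by decide⟩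

lemma P1223 : ∃ p : (R 3 3).Walk (vtx 1 2) (vtx 2 3), p.IsPath ∧ p.support.length = 7 :=
  ⟨(.cons (v := vtx 1 1) (by decide) (.cons (v := vtx 2 1) (by decide) (.cons (v := vtx 3 1) (by decide) (.cons (v := vtx 3 2) (by decide) (.cons (v := vtx 3 3) (by decide) (.cons (v := vtx 2 3) (by decide) .nil)))))), by rw [SimpleGraph.Walk.isPath_def]; decide, by decide⟩

lemma P1232 : ∃ p : (R 3 3).Walk (vtx 1 2) (vtx 3 2), p.IsPath ∧ p.support.length = 7 :=
  ⟨(.cons (v := vtx 1 1) (by decide) (.cons (v := vtx 2 1) (by decide) (.cons (v := vtx 2 2) (by decide) (.cons (v := vtx 2 3) (by decide) (.cons (v := vtx 3 3) (by decide) (.cons (v := vtx 3 2) (by decide) .nil)))))), by rw [SimpleGraph.Walk.isPath_def]; decide, by decide⟩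

lemma P2112 : ∃ p : (R 3 3).Walk (vtx 2 1) (vtx 1 2), p.IsPath ∧ p.support.length = 7 :=
  ⟨(.cons (v := vtx 2 2) (by decide) (.cons (v := vtx 3 2) (by decide) (.cons (v := vtx 3 3) (by decide) (.cons (v := vtx 2 3) (by decide) (.cons (v := vtx 1 3) (by decide) (.cons (v := vtx 1 2) (by decide) .nil)))))), by rw [SimpleGraph.Walk.isPath_def]; decide, by decide⟩

lemma P2123 : ∃ p : (R 3 3).Walk (vtx 2 1) (vtx 2 3), p.IsPath ∧ p.support.length = 7 :=
  ⟨(.cons (v := vtx 1 1) (by decide) (.cons (v := vtx 1 2) (by decide) (.cons (v := vtx 2 2) (by decide) (.cons (v := vtx 3 2) (by decide) (.cons (v := vtx 3 3) (by decide) (.cons (v := vtx 2 3) (by decide) .nil)))))), by rw [SimpleGraph.Walk.isPath_def]; decide, by decide⟩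

lemma P2132 : ∃ p : (R 3 3).Walk (vtx 2 1) (vtx 3 2), p.IsPath ∧ p.support.length = 7 :=
  ⟨(.cons (v := vtx 1 1) (by decide) (.cons (v := vtx 1 2) (by decide) (.cons (v := vtx 1 3) (by decide) (.cons (v := vtx 2 3) (by decide) (.cons (v := vtx 3 3) (by decide) (.cons (v := vtx 3 2) (by decide) .nil)))))), by rw [SimpleGraph.Walk.isPath_def]; decide, by decide⟩

lemma P2312 : ∃ p : (R 3 3).Walk (vtx 2 3) (vtx 1 2), p.IsPath ∧ p.support.length = 7 :=
  ⟨(.cons (v := vtx 3 3) (by decide) (.cons (v := vtx 3 2) (by decide) (.cons (v := vtx 3 1) (by decide) (.cons (v := vtx 2 1) (by decide) (.cons (v := vtx 1 1) (by decide) (.cons (v := vtx 1 2) (by decide) .nil)))))), by rw [SimpleGraph.Walk.isPath_def]; decide, by decide⟩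

lemma P2321 : ∃ p : (R 3 3).Walk (vtx 2 3) (vtx 2 1), p.IsPath ∧ p.support.length = 7 :=
  ⟨(.cons (v := vtx 3 3) (by decide) (.cons (v := vtx 3 2) (by decide) (.cons (v := vtx 2 2) (by decide) (.cons (v := vtx 1 2) (by decide) (.cons (v := vtx 1 1) (by decide) (.cons (v := vtx 2 1) (by decide) .nil)))))), by rw [SimpleGraph.Walk.isPath_def]; decide, by decide⟩

lemma P2332 : ∃ p : (R 3 3).Walk (vtx 2 3) (vtx 3 2), p.IsPath ∧ p.support.length = 7 :=
  ⟨(.cons (v := vtx 1 3) (by decide) (.cons (v := vtx 1 2) (by decide) (.cons (v := vtx 1 1) (by decide) (.cons (v := vtx 2 1) (by decide) (.cons (v := vtx 3 1) (by decide) (.cons (v := vtx 3 2) (by decide) .nil)))))), by rw [SimpleGraph.Walk.isPath_def]; decide, by decide⟩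

lemma P3212 : ∃ p : (R 3 3).Walk (vtx 3 2) (vtx 1 2), p.IsPath ∧ p.support.length = 7 :=
  ⟨(.cons (v := vtx 3 3) (by decide) (.cons (v := vtx 2 3) (by decide) (.cons (v := vtx 2 2) (by decide) (.cons (v := vtx 2 1) (by decide) (.cons (v := vtx 1 1) (by decide) (.cons (v := vtx 1 2) (by decide) .nil)))))), by rw [SimpleGraph.Walk.isPath_def]; decide, by decide⟩

lemma P3221 : ∃ p : (R 3 3).Walk (vtx 3 2) (vtx 2 1), p.IsPath ∧ p.support.length = 7 :=
  ⟨(.cons (v := vtx 3 3) (by decide) (.cons (v := vtx 2 3) (by decide) (.cons (v := vtx 1 3) (by decide) (.cons (v := vtx 1 2) (by decide) (.cons (v := vtx 1 1) (by decide) (.cons (v := vtx 2 1) (by decide) .nil)))))), by rw [SimpleGraph.Walk.isPath_def]; decide, by decide⟩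

lemma P3223 : ∃ p : (R 3 3).Walk (vtx 3 2) (vtx 2 3), p.IsPath ∧ p.support.length = 7 :=
  ⟨(.cons (v := vtx 3 1) (by decide) (.cons (v := vtx 2 1) (by decide) (.cons (v := vtx 1 1) (by decide) (.cons (v := vtx 1 2) (by decide) (.cons (v := vtx 1 3) (by decide) (.cons (v := vtx 2 3) (by decide) .nil)))))), by rw [SimpleGraph.Walk.isPath_def]; decide, by decide⟩


/-- list of black vertices as positions -/
lemma black_cases (a : ℤ × ℤ) (ha : a ∈ RectV 3 3) (ha' : ¬ White a) :
    a = (1,2) ∨ a = (2,1) ∨ a = (2,3) ∨ a = (3,2) := by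
  obtain ⟨h1, h2, h3, h4⟩ := ha
  rw [White, Int.even_iff] at ha'
  have : (a.1 = 1 ∧ a.2 = 2) ∨ (a.1 = 2 ∧ a.2 = 1) ∨ (a.1 = 2 ∧ a.2 = 3) ∨
      (a.1 = 3 ∧ a.2 = 2) := by omega
  rcases this with ⟨e1, e2⟩ | ⟨e1, e2⟩ | ⟨e1, e2⟩ | ⟨e1, e2⟩ <;>
    [left; (right; left); (right; right; left); (right; right; right)] <;>
    exact Prod.ext e1 e2

lemma exists7 (a b : ℤ × ℤ) (ha : a ∈ RectV 3 3) (hb : b ∈ RectV 3 3)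
    (ha' : ¬ White a) (hb' : ¬ White b) (hab : a ≠ b) :
    ∃ p : (R 3 3).Walk ⟨a, ha⟩ ⟨b, hb⟩, p.IsPath ∧ p.support.length = 7 := by
  rcases black_cases a ha ha' with rfl | rfl | rfl | rfl <;>
  rcases black_cases b hb hb' with rfl | rfl | rfl | rfl <;>
  first
    | exact absurd rfl hab
    | exact P1221 | exact P1223 | exact P1232
    | exact P2112 | exact P2123 | exact P2132
    | exact P2312 | exact P2321 | exact P2332
    | exact P3212 | exact P3221 | exact P3223

lemma adj_flip {u v : ℤ × ℤ} (h : GInf.Adj u v) : ¬ (White u ↔ White v) := by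
  have h' : (u.1 - v.1).natAbs + (u.2 - v.2).natAbs = 1 := h
  rw [White, White, Int.even_iff, Int.even_iff]
  omega

def bk (x : RectV 3 3) : Bool := ! decide (White x.val)

lemma two_mul_count {u v : RectV 3 3} (p : (R 3 3).Walk u v) :
    2 * (p.support.filter bk).length
      = p.length + (if White u.val then 0 else 1) + (if White v.val then 0 else 1) := by
  induction p with
  | @nil x => by_cases h : White x.val <;> simp [bk, h]
  | @cons u v w h q ih =>
    have hflip : ¬ (White u.val ↔ White v.val) := adj_flip h
    simp only [SimpleGraph.Walk.support_cons, List.filter_cons,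
      SimpleGraph.Walk.length_cons]
    by_cases h1 : White u.val <;> by_cases h2 : White v.val <;>
      by_cases h3 : White w.val <;>
      simp [bk, h1, h2, h3] at ih hflip ⊢ <;> omega

/-- In `R(3,3)`, for two distinct black vertices s and t, the longest path from
s to t has exactly 7 vertices. -/
theorem longest_path_R33_black_black (s t : RectV 3 3) (hne : s ≠ t)
    (hs : ¬ White s.val) (ht : ¬ White t.val) :
    IsGreatest {k : ℕ | ∃ p : (R 3 3).Walk s t, p.IsPath ∧ p.support.length = k} 7 := by
  constructor
  · obtain ⟨a, ha⟩ := s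
    obtain ⟨b, hb⟩ := t
    exact exists7 a b ha hb hs ht (fun h => hne (by simpa using h))
  · rintro k ⟨p, hp, rfl⟩
    have hcount := two_mul_count p
    rw [if_neg hs, if_neg ht] at hcount
    have hnd : (p.support.filter bk).Nodup := hp.support_nodup.filter _
    have hndL : ((p.support.filter bk).map Subtype.val).Nodup :=
      hnd.map Subtype.val_injective
    have hsub : ((p.support.filter bk).map Subtype.val).toFinset ⊆
        ({(1,2), (2,1), (2,3), (3,2)} : Finset (ℤ × ℤ)) := by
      intro x hx
      simp only [List.mem_toFinset, List.mem_map] at hx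
      obtain ⟨y, hy, rfl⟩ := hx
      have hyb : bk y = true := List.of_mem_filter hy
      have : ¬ White y.val := by simpa [bk] using hyb
      rcases black_cases y.val y.2 this with h | h | h | h <;> simp [h]
    have hle : (p.support.filter bk).length ≤ 4 := by
      have := Finset.card_le_card hsub
      rw [List.toFinset_card_of_nodup hndL, List.length_map] at this
      simpa using this
    have hsl : p.support.length = p.length + 1 := SimpleGraph.Walk.length_support p
    omega
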